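/- Let v : ℝ² → ℝ be harmonic on all of ℝ² and suppose there is a constant C > 0 such that ∫_{B_R(0)} |∇v|² ≤ C·R for every R > 0. Then ∇v ≡ 0, i.e. v is constant. -/

import Mathlib

open MeasureTheory Real

noncomputable section

abbrev E2 := EuclideanSpace ℝ (Fin 2)

/-- `u` is harmonic on `s`: twice differentiable with vanishing Laplacian. -/
def IsHarmonicOn (u : E2 → ℝ) (s : Set E2) : Prop :=
  ContDiffOn ℝ 2 u s ∧ ∀ x ∈ s,
    (∑ i : Fin 2,
      fderiv ℝ (fun y => fderiv ℝ u y (EuclideanSpace.single i 1)) x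
        (EuclideanSpace.single i 1)) = 0

/-! ### Auxiliary lemmas -/

/-- Cauchy–Schwarz for integrals of real functions on a finite measure. -/
lemma sq_integral_le_aux {α : Type*} [MeasurableSpace α] (μ : Measure α) [IsFiniteMeasure μ]
    (g : α → ℝ) (hg : Integrable g μ) (hg2 : Integrable (fun x => g x ^ 2) μ) :
    (∫ x, g x ∂μ) ^ 2 ≤ (μ Set.univ).toReal * ∫ x, g x ^ 2 ∂μ := by
  set T : ℝ := (μ Set.univ).toReal with hT
  rcases eq_or_lt_of_le (ENNReal.toReal_nonneg : (0:ℝ) ≤ T) with h0 | hTpos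
  · have hμ : μ = 0 := by
      have := (ENNReal.toReal_eq_zero_iff _).mp h0.symm
      rcases this with h | h
      · exact Measure.measure_univ_eq_zero.mp h
      · exact absurd h (measure_ne_top μ _)
    simp [hμ]
  set S : ℝ := ∫ x, g x ∂μ with hS
  have key : 0 ≤ ∫ x, (T * g x - S) ^ 2 ∂μ :=
    integral_nonneg fun x => sq_nonneg _
  have expand : ∫ x, (T * g x - S) ^ 2 ∂μ
      = T ^ 2 * (∫ x, g x ^ 2 ∂μ) - 2 * T * S * S + S ^ 2 * T := by
    have h1 : Integrable (fun x => T ^ 2 * g x ^ 2) μ := hg2.const_mul _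
    have h2 : Integrable (fun x => 2 * T * S * g x) μ := hg.const_mul _
    have h3 : Integrable (fun x => (S : ℝ) ^ 2) μ := integrable_const _
    have heq : (fun x => (T * g x - S) ^ 2)
        = fun x => (T ^ 2 * g x ^ 2 - 2 * T * S * g x) + S ^ 2 := by
      funext x; ring
    rw [heq]
    rw [integral_add (f := fun x => T ^ 2 * g x ^ 2 - 2 * T * S * g x)
      (g := fun _ => S ^ 2) (h1.sub h2) h3,
      integral_sub (f := fun x => T ^ 2 * g x ^ 2) (g := fun x => 2 * T * S * g x) h1 h2,
      integral_const_mul, integral_const_mul, integral_const]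
    simp only [smul_eq_mul, measureReal_def, ← hT, ← hS]
    ring
  rw [expand] at key
  have key2 : 0 ≤ T * (T * (∫ x, g x ^ 2 ∂μ) - S ^ 2) := by nlinarith
  nlinarith [mul_pos hTpos hTpos]

/-- Mean value inequality on circles for squared norms of holomorphic functions. -/
lemma circle_mean_sq_aux (f : ℂ → ℂ) (hf : Differentiable ℂ f) (w : ℂ) {r : ℝ} (hr : 0 < r) :
    2 * π * ‖f w‖ ^ 2 ≤ ∫ θ in Set.Ioo (-π) π, ‖f (w + r * Complex.exp (θ * Complex.I))‖ ^ 2 := by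
  have hw : w ∈ Metric.ball w r := Metric.mem_ball_self hr
  have hcauchy := (hf.diffContOnCl).circleIntegral_sub_inv_smul (R := r) (c := w) hw
  have h1 : (∮ z in C(w, r), (z - w)⁻¹ • f z)
      = ∫ θ in (0)..(2*π), Complex.I • f (circleMap w r θ) := by
    rw [circleIntegral]
    congr 1
    funext θ
    rw [deriv_circleMap, circleMap_sub_center, smul_smul, smul_eq_mul, smul_eq_mul]
    have hne : circleMap 0 r θ ≠ 0 := by
      simp [circleMap_zero, Complex.exp_ne_zero, hr.ne']
    field_simp
  rw [h1] at hcauchy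
  rw [intervalIntegral.integral_smul] at hcauchy
  have h2 : (∫ θ in (0)..(2*π), f (circleMap w r θ)) = (2 * π : ℝ) • f w := by
    have hI : (Complex.I : ℂ) ≠ 0 := Complex.I_ne_zero
    have := hcauchy
    rw [smul_eq_mul, show ((2:ℂ) * π * Complex.I) = Complex.I * (2*π) by ring,
      mul_smul] at this
    have h := smul_right_injective ℂ hI this
    rw [h, Complex.real_smul]
    push_cast
    ring_nf
  have h3 : 2 * π * ‖f w‖ ≤ ∫ θ in (0)..(2*π), ‖f (circleMap w r θ)‖ := by
    have := intervalIntegral.norm_integral_le_integral_norm (μ := volume)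
      (f := fun θ => f (circleMap w r θ)) (a := 0) (b := 2*π) Real.two_pi_pos.le
    rw [h2] at this
    rw [norm_smul] at this
    simpa [abs_of_pos Real.pi_pos, norm_smul, abs_of_pos Real.two_pi_pos] using this
  set μ : Measure ℝ := volume.restrict (Set.Ioc 0 (2*π)) with hμ
  haveI : IsFiniteMeasure μ := by
    rw [hμ]
    exact ⟨by rw [Measure.restrict_apply_univ, Real.volume_Ioc]; exact ENNReal.ofReal_lt_top⟩
  set g : ℝ → ℝ := fun θ => ‖f (circleMap w r θ)‖ with hg
  have hgc : Continuous g := (hf.continuous.comp (continuous_circleMap w r)).norm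
  have hgint : Integrable g μ := by
    rw [hμ]
    exact (hgc.integrableOn_Ioc)
  have hg2int : Integrable (fun θ => g θ ^ 2) μ := by
    rw [hμ]
    exact ((hgc.pow 2).integrableOn_Ioc)
  have hCS := sq_integral_le_aux μ g hgint hg2int
  have hμuniv : (μ Set.univ).toReal = 2 * π := by
    rw [hμ]
    simp [Real.volume_Ioc, ENNReal.toReal_ofReal Real.two_pi_pos.le, Real.pi_nonneg]
  rw [hμuniv] at hCS
  have h4 : (∫ θ in (0)..(2*π), g θ) = ∫ x, g x ∂μ := by
    rw [intervalIntegral.integral_of_le Real.two_pi_pos.le, hμ]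
  have h5 : 2 * π * ‖f w‖ ≤ ∫ x, g x ∂μ := by rw [← h4]; exact h3
  have h6 : (2 * π * ‖f w‖) ^ 2 ≤ (∫ x, g x ∂μ) ^ 2 := by
    have hnn : 0 ≤ 2 * π * ‖f w‖ := by positivity
    exact pow_le_pow_left₀ hnn h5 2
  have h7 : 2 * π * ‖f w‖ ^ 2 ≤ ∫ x, g x ^ 2 ∂μ := by
    nlinarith [Real.two_pi_pos, hCS, h6]
  have hper : Function.Periodic
      (fun θ : ℝ => ‖f (w + (r : ℂ) * Complex.exp ((θ : ℂ) * Complex.I))‖ ^ 2) (2*π) := by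
    intro θ
    simp only
    congr 3
    push_cast
    rw [add_mul, Complex.exp_add]
    simp [Complex.exp_two_pi_mul_I]
  have h8 : (∫ x, g x ^ 2 ∂μ)
      = ∫ θ in Set.Ioo (-π) π, ‖f (w + r * Complex.exp (θ * Complex.I))‖ ^ 2 := by
    rw [hμ]
    have : ∀ θ : ℝ, g θ ^ 2 = ‖f (w + r * Complex.exp (θ * Complex.I))‖ ^ 2 := by
      intro θ; rw [hg]; simp [circleMap]
    simp_rw [this]
    rw [← integral_Ioc_eq_integral_Ioo,
      ← intervalIntegral.integral_of_le Real.two_pi_pos.le,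
      ← intervalIntegral.integral_of_le (by linarith [Real.pi_pos] : -π ≤ π)]
    have := hper.intervalIntegral_add_eq (t := 0) (s := -π)
    rw [zero_add] at this
    rw [this, show -π + 2*π = π by ring]
  rw [← h8]
  exact h7

/-- Polar coordinates for integrals over balls. -/
lemma polar_ball_aux (g : ℂ → ℝ) (hg : Continuous g) (w : ℂ) {R : ℝ} (hR : 0 < R) :
    (∫ r in Set.Ioo (0:ℝ) R,
        r * ∫ θ in Set.Ioo (-π) π, g (w + (r:ℂ) * Complex.exp ((θ:ℂ) * Complex.I)))
      = ∫ z in Metric.ball w R, g z := by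
  have htrans : (∫ z in Metric.ball w R, g z) = ∫ z in Metric.ball (0:ℂ) R, g (w + z) := by
    have hmp : MeasurePreserving (fun z : ℂ => w + z) volume volume :=
      measurePreserving_add_left volume w
    have hemb : MeasurableEmbedding (fun z : ℂ => w + z) :=
      (Homeomorph.addLeft w).measurableEmbedding
    have := hmp.setIntegral_preimage_emb hemb g (Metric.ball w R)
    rw [← this]
    congr 1
    ext z
    simp [Metric.mem_ball, dist_eq_norm]
  rw [htrans]
  set h : ℂ → ℝ := fun z => g (w + z) with hh
  have hball : MeasurableSet (Metric.ball (0:ℂ) R) := measurableSet_ball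
  rw [← integral_indicator hball]
  rw [← Complex.integral_comp_polarCoord_symm (Set.indicator (Metric.ball (0:ℂ) R) h)]
  set S : Set (ℝ × ℝ) := Set.Ioo (0:ℝ) R ×ˢ Set.Ioo (-π) π with hSdef
  set F : ℝ × ℝ → ℝ := fun p => p.1 * h ((p.1 : ℂ) * Complex.exp ((p.2 : ℂ) * Complex.I))
    with hF
  have hstep : (∫ p in polarCoord.target,
      p.1 • Set.indicator (Metric.ball (0:ℂ) R) h (Complex.polarCoord.symm p))
      = ∫ p in S, F p := by
    have hmeas : MeasurableSet polarCoord.target :=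
      measurableSet_Ioi.prod measurableSet_Ioo
    have hkey : ∀ p ∈ polarCoord.target,
        p.1 • Set.indicator (Metric.ball (0:ℂ) R) h (Complex.polarCoord.symm p)
        = Set.indicator S F p := by
      rintro ⟨r, θ⟩ hp
      rw [polarCoord_target] at hp
      obtain ⟨hr, hθ⟩ := hp
      simp only [Set.mem_Ioi] at hr
      have habs : ‖Complex.polarCoord.symm (r, θ)‖ = r := by
        rw [Complex.norm_polarCoord_symm]; exact abs_of_pos hr
      have hsymm : Complex.polarCoord.symm (r, θ) = (r:ℂ) * Complex.exp ((θ:ℂ) * Complex.I) := by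
        rw [Complex.polarCoord_symm_apply, Complex.exp_mul_I]
        push_cast
        ring
      by_cases hlt : r < R
      · rw [Set.indicator_of_mem, Set.indicator_of_mem]
        · rw [hsymm, smul_eq_mul]
        · exact Set.mem_prod.2 ⟨⟨hr, hlt⟩, hθ⟩
        · rw [Metric.mem_ball, Complex.dist_eq, sub_zero, habs]
          exact hlt
      · rw [Set.indicator_of_notMem, Set.indicator_of_notMem, smul_zero]
        · intro hmem
          exact hlt (Set.mem_prod.1 hmem).1.2
        · rw [Metric.mem_ball, Complex.dist_eq, sub_zero, habs]
          exact hlt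
    rw [setIntegral_congr_fun hmeas hkey]
    rw [setIntegral_indicator (by exact (measurableSet_Ioo.prod measurableSet_Ioo))]
    congr 1
    rw [Set.inter_eq_right.2]
    rw [hSdef, polarCoord_target]
    exact Set.prod_mono (Set.Ioo_subset_Ioi_self) (le_refl _)
  rw [hstep]
  have hFc : Continuous F := by
    apply continuous_fst.mul
    apply hg.comp
    exact continuous_const.add ((Complex.continuous_ofReal.comp continuous_fst).mul
      ((Complex.continuous_ofReal.comp continuous_snd).mul continuous_const).cexp)
  have hFint : IntegrableOn F S := by
    have hK : IsCompact (Set.Icc ((0:ℝ), -π) (R, π)) := isCompact_Icc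
    have : IntegrableOn F (Set.Icc ((0:ℝ), -π) (R, π)) :=
      hFc.continuousOn.integrableOn_compact hK
    apply this.mono_set
    rw [hSdef, Set.Icc_prod_eq]
    exact Set.prod_mono Set.Ioo_subset_Icc_self Set.Ioo_subset_Icc_self
  rw [hSdef]
  rw [Measure.volume_eq_prod, ← Measure.prod_restrict]
  rw [integral_prod]
  · apply setIntegral_congr_fun measurableSet_Ioo
    intro r hr
    simp only [hF, hh]
    rw [integral_const_mul]
  · rw [Measure.prod_restrict, ← Measure.volume_eq_prod]
    exact hFint

/-- Sub-mean value property on balls for squared norms of entire functions. -/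
lemma meanval_ball_aux (f : ℂ → ℂ) (hf : Differentiable ℂ f) (w : ℂ) {R : ℝ} (hR : 0 < R) :
    π * R ^ 2 * ‖f w‖ ^ 2 ≤ ∫ z in Metric.ball w R, ‖f z‖ ^ 2 := by
  set g : ℂ → ℝ := fun z => ‖f z‖ ^ 2 with hgdef
  have hgc : Continuous g := (hf.continuous.norm).pow 2
  rw [← polar_ball_aux g hgc w hR]
  set F : ℝ × ℝ → ℝ := fun p => p.1 * g (w + (p.1 : ℂ) * Complex.exp ((p.2 : ℂ) * Complex.I))
    with hF
  have hFc : Continuous F := by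
    apply continuous_fst.mul
    apply hgc.comp
    exact continuous_const.add ((Complex.continuous_ofReal.comp continuous_fst).mul
      ((Complex.continuous_ofReal.comp continuous_snd).mul continuous_const).cexp)
  have hFint : IntegrableOn F (Set.Ioo (0:ℝ) R ×ˢ Set.Ioo (-π) π) := by
    have hK : IsCompact (Set.Icc ((0:ℝ), -π) (R, π)) := isCompact_Icc
    have : IntegrableOn F (Set.Icc ((0:ℝ), -π) (R, π)) :=
      hFc.continuousOn.integrableOn_compact hK
    apply this.mono_set
    rw [Set.Icc_prod_eq]
    exact Set.prod_mono Set.Ioo_subset_Icc_self Set.Ioo_subset_Icc_self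
  have hright : IntegrableOn
      (fun r : ℝ => r * ∫ θ in Set.Ioo (-π) π, g (w + (r:ℂ) * Complex.exp ((θ:ℂ) * Complex.I)))
      (Set.Ioo (0:ℝ) R) := by
    have h1 : Integrable F ((volume.restrict (Set.Ioo (0:ℝ) R)).prod
        (volume.restrict (Set.Ioo (-π) π))) := by
      rw [Measure.prod_restrict, ← Measure.volume_eq_prod]
      exact hFint
    have h2 := h1.integral_prod_left
    have heq : (fun r : ℝ => ∫ θ, F (r, θ) ∂(volume.restrict (Set.Ioo (-π) π)))
        = fun r : ℝ => r * ∫ θ in Set.Ioo (-π) π,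
            g (w + (r:ℂ) * Complex.exp ((θ:ℂ) * Complex.I)) := by
      funext r
      simp only [hF]
      rw [integral_const_mul]
    rwa [heq] at h2
  have hleft : IntegrableOn (fun r : ℝ => 2 * π * ‖f w‖ ^ 2 * r) (Set.Ioo (0:ℝ) R) := by
    have : IntegrableOn (fun r : ℝ => 2 * π * ‖f w‖ ^ 2 * r) (Set.Icc (0:ℝ) R) :=
      ((continuous_const.mul continuous_id).continuousOn).integrableOn_compact isCompact_Icc
    exact this.mono_set Set.Ioo_subset_Icc_self
  have hmono : (∫ r in Set.Ioo (0:ℝ) R, 2 * π * ‖f w‖ ^ 2 * r)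
      ≤ ∫ r in Set.Ioo (0:ℝ) R,
          r * ∫ θ in Set.Ioo (-π) π, g (w + (r:ℂ) * Complex.exp ((θ:ℂ) * Complex.I)) := by
    apply setIntegral_mono_on hleft hright measurableSet_Ioo
    intro r hr
    rw [mul_comm (2 * π * ‖f w‖ ^ 2) r]
    apply mul_le_mul_of_nonneg_left _ hr.1.le
    exact circle_mean_sq_aux f hf w hr.1
  refine le_trans (le_of_eq ?_) hmono
  rw [integral_const_mul, ← integral_Ioc_eq_integral_Ioo,
    ← intervalIntegral.integral_of_le hR.le, integral_id]
  ring

def eeH : Fin 2 → E2 := fun i => EuclideanSpace.single i 1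
def φcH : ℂ ≃ₗᵢ[ℝ] E2 := Complex.orthonormalBasisOneI.repr
def TlmH : ℂ →L[ℝ] E2 := (φcH.toContinuousLinearEquiv : ℂ →L[ℝ] E2)

lemma φcH_one : (φcH 1) = eeH 0 := by
  ext j
  fin_cases j <;>
    simp [φcH, eeH, Complex.orthonormalBasisOneI_repr_apply, EuclideanSpace.single_apply]

lemma φcH_I : (φcH Complex.I) = eeH 1 := by
  ext j
  fin_cases j <;>
    simp [φcH, eeH, Complex.orthonormalBasisOneI_repr_apply, EuclideanSpace.single_apply]

lemma clm_complex_apply_aux (L : ℂ →L[ℝ] ℂ) (hL : L Complex.I = Complex.I * L 1) (h : ℂ) :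
    L h = h * L 1 := by
  have hrep : h = (h.re : ℝ) • (1 : ℂ) + (h.im : ℝ) • Complex.I := by
    simp [Complex.real_smul, Complex.re_add_im]
  rw [hrep, map_add, ContinuousLinearMap.map_smul, ContinuousLinearMap.map_smul, hL]
  simp only [Complex.real_smul]
  ring

def gradf (v : E2 → ℝ) : ℂ → ℂ := fun z =>
  ((fderiv ℝ v (φcH z) (eeH 0) : ℝ) : ℂ) - ((fderiv ℝ v (φcH z) (eeH 1) : ℝ) : ℂ) * Complex.I

lemma gradf_entire (v : E2 → ℝ) (hv2 : ContDiff ℝ 2 v)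
    (hlap : ∀ x : E2, (∑ i : Fin 2,
      fderiv ℝ (fun y => fderiv ℝ v y (EuclideanSpace.single i 1)) x
        (EuclideanSpace.single i 1)) = 0) :
    Differentiable ℂ (gradf v) := by
  have hv1 : Differentiable ℝ v := hv2.differentiable two_ne_zero
  have hv' : ContDiff ℝ 1 (fderiv ℝ v) := hv2.fderiv_right (le_refl 2)
  have hv'd : Differentiable ℝ (fderiv ℝ v) := hv'.differentiable one_ne_zero
  intro z
  set x : E2 := φcH z with hx
  set A : E2 →L[ℝ] E2 →L[ℝ] ℝ := fderiv ℝ (fderiv ℝ v) x with hA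
  have hAd : HasFDerivAt (fderiv ℝ v) A x := (hv'd x).hasFDerivAt
  have hT : HasFDerivAt (fun z : ℂ => φcH z) TlmH z := φcH.toContinuousLinearEquiv.hasFDerivAt
  have hui : ∀ i : Fin 2, HasFDerivAt (fun z : ℂ => fderiv ℝ v (φcH z) (eeH i))
      ((ContinuousLinearMap.apply ℝ ℝ (eeH i)).comp (A.comp TlmH)) z := by
    intro i
    have h1 : HasFDerivAt (fun z : ℂ => fderiv ℝ v (φcH z)) (A.comp TlmH) z := by
      exact hAd.comp z hT
    exact ((ContinuousLinearMap.apply ℝ ℝ (eeH i)).hasFDerivAt).comp z h1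
  set U0 : ℂ →L[ℝ] ℝ := (ContinuousLinearMap.apply ℝ ℝ (eeH 0)).comp (A.comp TlmH) with hU0
  set U1 : ℂ →L[ℝ] ℝ := (ContinuousLinearMap.apply ℝ ℝ (eeH 1)).comp (A.comp TlmH) with hU1
  set L : ℂ →L[ℝ] ℂ :=
    Complex.ofRealCLM.comp U0 - Complex.I • Complex.ofRealCLM.comp U1 with hL
  have hfd : HasFDerivAt (gradf v) L z := by
    have h0 : HasFDerivAt (fun z : ℂ => ((fderiv ℝ v (φcH z) (eeH 0) : ℝ) : ℂ))
        (Complex.ofRealCLM.comp U0) z := Complex.ofRealCLM.hasFDerivAt.comp z (hui 0)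
    have h1 : HasFDerivAt (fun z : ℂ => ((fderiv ℝ v (φcH z) (eeH 1) : ℝ) : ℂ))
        (Complex.ofRealCLM.comp U1) z := Complex.ofRealCLM.hasFDerivAt.comp z (hui 1)
    have h2 : HasFDerivAt (fun z : ℂ => Complex.I * ((fderiv ℝ v (φcH z) (eeH 1) : ℝ) : ℂ))
        (Complex.I • Complex.ofRealCLM.comp U1) z := h1.const_mul Complex.I
    have := h0.sub h2
    apply this.congr_of_eventuallyEq
    filter_upwards with z
    unfold gradf
    rw [Pi.sub_apply]
    ring
  have hTl1 : TlmH 1 = eeH 0 := φcH_one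
  have hTlI : TlmH Complex.I = eeH 1 := φcH_I
  have hsym : A (eeH 1) (eeH 0) = A (eeH 0) (eeH 1) :=
    second_derivative_symmetric (fun y => (hv1 y).hasFDerivAt) hAd (eeH 1) (eeH 0)
  have hlap' : A (eeH 0) (eeH 0) + A (eeH 1) (eeH 1) = 0 := by
    have := hlap x
    rw [Fin.sum_univ_two] at this
    have hfd' : ∀ i : Fin 2, fderiv ℝ (fun y => fderiv ℝ v y (EuclideanSpace.single i 1)) x
        = (ContinuousLinearMap.apply ℝ ℝ (EuclideanSpace.single i 1)).comp A := by
      intro i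
      exact (((ContinuousLinearMap.apply ℝ ℝ (EuclideanSpace.single i 1)).hasFDerivAt).comp x
        hAd).fderiv
    rw [hfd' 0, hfd' 1] at this
    simpa [eeH] using this
  have hL1 : L 1 = (A (eeH 0) (eeH 0) : ℂ) - (A (eeH 0) (eeH 1) : ℂ) * Complex.I := by
    simp [hL, hU0, hU1, ContinuousLinearMap.comp_apply, ContinuousLinearMap.apply_apply, hTl1]
    ring
  have hLI : L Complex.I = (A (eeH 1) (eeH 0) : ℂ) - (A (eeH 1) (eeH 1) : ℂ) * Complex.I := by
    simp [hL, hU0, hU1, ContinuousLinearMap.comp_apply, ContinuousLinearMap.apply_apply, hTlI]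
    ring
  have hCR : L Complex.I = Complex.I * L 1 := by
    rw [hL1, hLI, hsym]
    have h11 : (A (eeH 1) (eeH 1) : ℝ) = - A (eeH 0) (eeH 0) := by linarith [hlap']
    rw [h11]
    push_cast
    ring_nf
    rw [Complex.I_sq]
    ring
  set M : ℂ →L[ℂ] ℂ := L 1 • ContinuousLinearMap.id ℂ ℂ with hM
  have hrs : M.restrictScalars ℝ = L := by
    ext h
    have := clm_complex_apply_aux L hCR h
    simp [hM, this]
    ring
  exact (hasFDerivAt_of_restrictScalars ℝ hfd hrs).differentiableAt

lemma norm_gradf_sq (v : E2 → ℝ) (z : ℂ) :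
    ‖gradf v z‖ ^ 2 = ∑ i : Fin 2, (fderiv ℝ v (φcH z) (EuclideanSpace.single i 1)) ^ 2 := by
  rw [Fin.sum_univ_two]
  rw [Complex.sq_norm, Complex.normSq_apply]
  unfold gradf
  simp [eeH]
  ring

lemma gradf_transfer (v : E2 → ℝ) (r : ℝ) :
    (∫ z in Metric.ball (0:ℂ) r, ‖gradf v z‖ ^ 2)
      = ∫ x in Metric.ball (0:E2) r,
          ∑ i : Fin 2, (fderiv ℝ v x (EuclideanSpace.single i 1)) ^ 2 := by
  have hmp : MeasurePreserving (φcH : ℂ → E2) volume volume := φcH.measurePreserving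
  have hemb : MeasurableEmbedding (φcH : ℂ → E2) := φcH.toHomeomorph.measurableEmbedding
  have := hmp.setIntegral_preimage_emb hemb
    (fun x => ∑ i : Fin 2, (fderiv ℝ v x (EuclideanSpace.single i 1)) ^ 2)
    (Metric.ball (0:E2) r)
  rw [← this]
  have hpre : (φcH : ℂ → E2) ⁻¹' Metric.ball (0:E2) r = Metric.ball (0:ℂ) r := by
    ext z
    simp only [Set.mem_preimage, Metric.mem_ball]
    constructor
    · intro h
      rwa [show (0:E2) = φcH 0 by simp, φcH.dist_map] at h
    · intro h
      rwa [show (0:E2) = φcH 0 by simp, φcH.dist_map]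
  rw [hpre]
  apply setIntegral_congr_fun measurableSet_ball
  intro z _
  exact norm_gradf_sq v z

theorem harmonic_linear_energy_growth_const (v : E2 → ℝ)
    (hv : IsHarmonicOn v Set.univ) (C : ℝ) (hC : 0 < C)
    (hE : ∀ R > (0 : ℝ),
      (∫ x in Metric.ball (0 : E2) R,
        ∑ i : Fin 2, (fderiv ℝ v x (EuclideanSpace.single i 1)) ^ 2) ≤ C * R) :
    ∀ x : E2, fderiv ℝ v x = 0 := by
  obtain ⟨hcd, hlapOn⟩ := hv
  have hv2 : ContDiff ℝ 2 v := contDiffOn_univ.mp hcd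
  have hlap : ∀ x : E2, (∑ i : Fin 2,
      fderiv ℝ (fun y => fderiv ℝ v y (EuclideanSpace.single i 1)) x
        (EuclideanSpace.single i 1)) = 0 := fun x => hlapOn x (Set.mem_univ x)
  have hf : Differentiable ℂ (gradf v) := gradf_entire v hv2 hlap
  have hint : ∀ r : ℝ, IntegrableOn (fun z => ‖gradf v z‖ ^ 2) (Metric.ball (0:ℂ) r) := by
    intro r
    have : IntegrableOn (fun z => ‖gradf v z‖ ^ 2) (Metric.closedBall (0:ℂ) r) :=
      (((hf.continuous.norm).pow 2).continuousOn).integrableOn_compact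
        (isCompact_closedBall _ _)
    exact this.mono_set Metric.ball_subset_closedBall
  -- gradf vanishes everywhere
  have hzero : ∀ w : ℂ, gradf v w = 0 := by
    intro w
    by_contra hne
    have ha : 0 < ‖gradf v w‖ ^ 2 := by
      have h' : 0 < ‖gradf v w‖ := norm_pos_iff.mpr hne
      positivity
    set a : ℝ := ‖gradf v w‖ ^ 2 with hadef
    have hbound : ∀ R > (0:ℝ), π * R ^ 2 * a ≤ C * (R + ‖w‖) := by
      intro R hR
      have h1 := meanval_ball_aux (gradf v) hf w hR
      have hsub : Metric.ball w R ⊆ Metric.ball (0:ℂ) (R + ‖w‖) := by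
        intro z hz
        rw [Metric.mem_ball] at hz ⊢
        rw [dist_zero_right]
        calc ‖z‖ ≤ dist z w + ‖w‖ := by
              rw [dist_eq_norm]
              simpa using norm_add_le (z - w) w
          _ < R + ‖w‖ := by linarith
      have h2 : (∫ z in Metric.ball w R, ‖gradf v z‖ ^ 2)
          ≤ ∫ z in Metric.ball (0:ℂ) (R + ‖w‖), ‖gradf v z‖ ^ 2 := by
        apply setIntegral_mono_set (hint (R + ‖w‖))
        · exact Filter.Eventually.of_forall fun z => sq_nonneg _
        · exact HasSubset.Subset.eventuallyLE hsub
      have hRw : (0:ℝ) < R + ‖w‖ := by positivity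
      have h3 := hE (R + ‖w‖) hRw
      rw [← gradf_transfer v (R + ‖w‖)] at h3
      rw [← hadef] at h1
      linarith
    have hπa : 0 < π * a := mul_pos Real.pi_pos ha
    set R : ℝ := max (max 1 ‖w‖) (2 * C / (π * a) + 1) with hRdef
    have hRge1 : (1:ℝ) ≤ R := le_trans (le_max_left _ _) (le_max_left _ _)
    have hRgew : ‖w‖ ≤ R := le_trans (le_max_right _ _) (le_max_left _ _)
    have hRgeC : 2 * C / (π * a) + 1 ≤ R := le_max_right _ _
    have hRpos : (0:ℝ) < R := lt_of_lt_of_le one_pos hRge1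
    have hb := hbound R hRpos
    have hb2 : π * R ^ 2 * a ≤ 2 * C * R := by nlinarith
    have hb3 : π * R * a ≤ 2 * C := by nlinarith
    have hb4 : R ≤ 2 * C / (π * a) := by
      rw [le_div_iff₀ hπa]
      nlinarith
    linarith
  -- conclude
  intro x
  have h0 := hzero (φcH.symm x)
  have hback : φcH (φcH.symm x) = x := φcH.apply_symm_apply x
  rw [gradf, hback] at h0
  have hre := congrArg Complex.re h0
  have him := congrArg Complex.im h0
  simp at hre him
  ext y
  have hy : (y : E2) = y 0 • EuclideanSpace.single 0 1 + y 1 • EuclideanSpace.single 1 1 := by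
    ext j
    fin_cases j <;> simp [EuclideanSpace.single_apply]
  rw [hy]
  rw [map_add, ContinuousLinearMap.map_smul, ContinuousLinearMap.map_smul]
  simp only [eeH] at hre him
  simp [hre, him]

end
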